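/- arXiv:1805.09737 — 2 statements merged into one kernel-verified Lean document; each statement's English description precedes it below -/
import Mathlib

section
/- Let n ≥ 2 and let A, B be n×n real skew-symmetric matrices with min{rank(A), rank(B)} ≤ 2. Then inf E(A,B) ≤ inf O(A,B) and sup E(A,B) ≥ sup O(A,B). -/
open Matrix

noncomputable def frobNorm {n : ℕ} (M : Matrix (Fin n) (Fin n) ℝ) : ℝ :=
  Real.sqrt (Mᵀ * M).trace

def Eset {n : ℕ} (A B : Matrix (Fin n) (Fin n) ℝ) : Set ℝ :=
  {t | ∃ U : Matrix (Fin n) (Fin n) ℝ, Uᵀ = U ∧ frobNorm U = 1 ∧ t = (A * U * B * U).trace}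

def Oset {n : ℕ} (A B : Matrix (Fin n) (Fin n) ℝ) : Set ℝ :=
  {t | ∃ W : Matrix (Fin n) (Fin n) ℝ, Wᵀ = -W ∧ frobNorm W = 1 ∧ t = (A * W * B * Wᵀ).trace}

variable {n : ℕ}

-- toolbox
lemma mul_vmv (M : Matrix (Fin n) (Fin n) ℝ) (a b : Fin n → ℝ) :
    M * vecMulVec a b = vecMulVec (M *ᵥ a) b := by
  ext i j
  simp [mul_apply, vecMulVec_apply, mulVec, dotProduct, Finset.sum_mul, mul_assoc]

lemma vmv_mul (M : Matrix (Fin n) (Fin n) ℝ) (a b : Fin n → ℝ) :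
    vecMulVec a b * M = vecMulVec a (Mᵀ *ᵥ b) := by
  ext i j
  simp [mul_apply, vecMulVec_apply, mulVec, dotProduct, Finset.mul_sum, transpose_apply]
  ring_nf
  congr 1; ext k; ring

lemma vmv_mul_vmv (a b c d : Fin n → ℝ) :
    vecMulVec a b * vecMulVec c d = (b ⬝ᵥ c) • vecMulVec a d := by
  ext i j
  simp [mul_apply, vecMulVec_apply, dotProduct, Finset.sum_mul, Finset.mul_sum]
  ring_nf
  congr 1; ext k; ring

lemma trace_vmv (a b : Fin n → ℝ) : (vecMulVec a b).trace = a ⬝ᵥ b := by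
  simp [trace, diag, vecMulVec_apply, dotProduct]

lemma transpose_vmv (a b : Fin n → ℝ) : (vecMulVec a b)ᵀ = vecMulVec b a := by
  ext i j; simp [vecMulVec_apply, transpose_apply, mul_comm]

lemma vmv_mulVec (a b x : Fin n → ℝ) : (vecMulVec a b) *ᵥ x = (b ⬝ᵥ x) • a := by
  funext i
  simp only [mulVec, vecMulVec_apply, dotProduct, Pi.smul_apply, smul_eq_mul,
    Finset.sum_mul, Finset.mul_sum]
  congr 1; ext k; ring

lemma skew_dot {M : Matrix (Fin n) (Fin n) ℝ} (hM : Mᵀ = -M) (x y : Fin n → ℝ) :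
    x ⬝ᵥ (M *ᵥ y) = -(y ⬝ᵥ (M *ᵥ x)) := by
  rw [dotProduct_mulVec, ← mulVec_transpose, hM, neg_mulVec]
  rw [neg_dotProduct, dotProduct_comm]

lemma skew_dot_self {M : Matrix (Fin n) (Fin n) ℝ} (hM : Mᵀ = -M) (x : Fin n → ℝ) :
    x ⬝ᵥ (M *ᵥ x) = 0 := by
  have := skew_dot hM x x; linarith

lemma mulVec_eq_iff (M N : Matrix (Fin n) (Fin n) ℝ) (h : ∀ z, M *ᵥ z = N *ᵥ z) : M = N := by
  ext i j
  have := congrFun (h (Pi.single j 1)) i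
  simpa [mulVec_single] using this

variable {n : ℕ}

lemma trace_conj_eq_sum (M : Matrix (Fin n) (Fin n) ℝ) :
    (Mᵀ * M).trace = ∑ j, ∑ i, (M i j)^2 := by
  simp [trace, diag, mul_apply, transpose_apply, sq]

lemma trace_conj_nonneg (M : Matrix (Fin n) (Fin n) ℝ) : 0 ≤ (Mᵀ * M).trace := by
  rw [trace_conj_eq_sum]
  positivity

lemma cross0 (W R S R' S' : Matrix (Fin n) (Fin n) ℝ) (hR : Rᵀ = R) (hS : Sᵀ = S)
    (h : R * R' = 0 ∨ S' * S = 0) : ((R * W * S)ᵀ * (R' * W * S')).trace = 0 := by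
  have e1 : (R * W * S)ᵀ * (R' * W * S') = S * (Wᵀ * (R * R') * W * S') := by
    simp only [transpose_mul, hR, hS, Matrix.mul_assoc]
  rw [e1, trace_mul_comm]
  have e2 : Wᵀ * (R * R') * W * S' * S = Wᵀ * (R * R') * (W * (S' * S)) := by
    simp only [Matrix.mul_assoc]
  rw [e2]
  rcases h with h | h
  · rw [h]; simp
  · rw [h]; simp

lemma vmv_smul_right (a b : Fin n → ℝ) (c : ℝ) :
    vecMulVec a (c • b) = c • vecMulVec a b := by
  ext i j; simp [vecMulVec_apply]; ring

lemma val_eq (A X : Matrix (Fin n) (Fin n) ℝ) (u v : Fin n → ℝ) (γ : ℝ) :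
    (A * X * (γ • (vecMulVec u v - vecMulVec v u)) * Xᵀ).trace
      = γ * ((X *ᵥ v) ⬝ᵥ (A *ᵥ (X *ᵥ u)) - (X *ᵥ u) ⬝ᵥ (A *ᵥ (X *ᵥ v))) := by
  have h1 : A * X * (γ • (vecMulVec u v - vecMulVec v u)) * Xᵀ
      = γ • (vecMulVec (A *ᵥ (X *ᵥ u)) (X *ᵥ v) - vecMulVec (A *ᵥ (X *ᵥ v)) (X *ᵥ u)) := by
    rw [Matrix.mul_smul, Matrix.smul_mul, smul_sub, Matrix.mul_sub, Matrix.sub_mul,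
      mul_vmv, mul_vmv, vmv_mul, vmv_mul, transpose_transpose, ← Matrix.mulVec_mulVec,
      ← Matrix.mulVec_mulVec, smul_sub]
  rw [h1, trace_smul, trace_sub, trace_vmv, trace_vmv, smul_eq_mul]
  rw [dotProduct_comm ((A *ᵥ (X *ᵥ u))) (X *ᵥ v), dotProduct_comm ((A *ᵥ (X *ᵥ v))) (X *ᵥ u)]

lemma construction (A W : Matrix (Fin n) (Fin n) ℝ) (u v : Fin n → ℝ)
    (hu : u ⬝ᵥ u = 1) (hv : v ⬝ᵥ v = 1) (huv : u ⬝ᵥ v = 0)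
    (γ : ℝ) (hA : Aᵀ = -A) (hW : Wᵀ = -W) :
    ∃ U : Matrix (Fin n) (Fin n) ℝ, Uᵀ = U ∧ (Uᵀ * U).trace ≤ (Wᵀ * W).trace ∧
      (A * U * (γ • (vecMulVec u v - vecMulVec v u)) * U).trace
        = (A * W * (γ • (vecMulVec u v - vecMulVec v u)) * Wᵀ).trace := by
  have hvu : v ⬝ᵥ u = 0 := by rw [dotProduct_comm]; exact huv
  set J : Matrix (Fin n) (Fin n) ℝ := vecMulVec u v - vecMulVec v u with hJ
  set P : Matrix (Fin n) (Fin n) ℝ := vecMulVec u u + vecMulVec v v with hP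
  set Q : Matrix (Fin n) (Fin n) ℝ := 1 - P with hQ
  set α : ℝ := v ⬝ᵥ (W *ᵥ u) with hα
  set K : Matrix (Fin n) (Fin n) ℝ := Q * W * J with hK
  set U : Matrix (Fin n) (Fin n) ℝ := α • P + (K + Kᵀ) with hU
  -- basic transposes
  have hPt : Pᵀ = P := by rw [hP, transpose_add, transpose_vmv, transpose_vmv]
  have hQt : Qᵀ = Q := by rw [hQ, transpose_sub, transpose_one, hPt]
  have hJt : Jᵀ = -J := by rw [hJ, transpose_sub, transpose_vmv, transpose_vmv, neg_sub]
  -- product identities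
  have hPP : P * P = P := by
    rw [hP, Matrix.add_mul, Matrix.mul_add, Matrix.mul_add, vmv_mul_vmv, vmv_mul_vmv,
      vmv_mul_vmv, vmv_mul_vmv, hu, hv, huv, hvu]
    simp
  have hPJ : P * J = J := by
    rw [hP, hJ, Matrix.add_mul, Matrix.mul_sub, Matrix.mul_sub, vmv_mul_vmv, vmv_mul_vmv,
      vmv_mul_vmv, vmv_mul_vmv, hu, hv, huv, hvu]
    simp
    abel
  have hJP : J * P = J := by
    rw [hP, hJ, Matrix.sub_mul, Matrix.mul_add, Matrix.mul_add, vmv_mul_vmv, vmv_mul_vmv,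
      vmv_mul_vmv, vmv_mul_vmv, hu, hv, huv, hvu]
    simp
  have hJJ : J * J = -P := by
    rw [hP, hJ, Matrix.sub_mul, Matrix.mul_sub, Matrix.mul_sub, vmv_mul_vmv, vmv_mul_vmv,
      vmv_mul_vmv, vmv_mul_vmv, hu, hv, huv, hvu]
    simp
    abel
  have hJJt : J * Jᵀ = P := by rw [hJt, Matrix.mul_neg, hJJ, neg_neg]
  have hJtJ : Jᵀ * J = P := by rw [hJt, Matrix.neg_mul, hJJ, neg_neg]
  have hPQ : P * Q = 0 := by rw [hQ, Matrix.mul_sub, Matrix.mul_one, hPP, sub_self]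
  have hQP : Q * P = 0 := by rw [hQ, Matrix.sub_mul, Matrix.one_mul, hPP, sub_self]
  have hJQ : J * Q = 0 := by rw [hQ, Matrix.mul_sub, Matrix.mul_one, hJP, sub_self]
  have hQQ : Q * Q = Q := by
    rw [hQ, Matrix.sub_mul, Matrix.one_mul, Matrix.mul_sub, Matrix.mul_one, hPP]
    simp
  have htrP : P.trace = 2 := by rw [hP, trace_add, trace_vmv, trace_vmv, hu, hv]; norm_num
  -- mulVec facts
  have hPu : P *ᵥ u = u := by
    rw [hP, add_mulVec, vmv_mulVec, vmv_mulVec, hu, hvu]; simp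
  have hPv : P *ᵥ v = v := by
    rw [hP, add_mulVec, vmv_mulVec, vmv_mulVec, hv, huv]; simp
  have hJu : J *ᵥ u = -v := by
    rw [hJ, sub_mulVec, vmv_mulVec, vmv_mulVec, hu, hvu]; simp
  have hJv : J *ᵥ v = u := by
    rw [hJ, sub_mulVec, vmv_mulVec, vmv_mulVec, hv, huv]; simp
  have hWuu : u ⬝ᵥ (W *ᵥ u) = 0 := skew_dot_self hW u
  have hWvv : v ⬝ᵥ (W *ᵥ v) = 0 := skew_dot_self hW v
  have hWuv : u ⬝ᵥ (W *ᵥ v) = -α := by rw [skew_dot hW u v, ← hα]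
  have hPq : P *ᵥ (W *ᵥ v) = -(α • u) := by
    rw [hP, add_mulVec, vmv_mulVec, vmv_mulVec, hWuv, hWvv]; simp
  have hPp : P *ᵥ (W *ᵥ u) = α • v := by
    rw [hP, add_mulVec, vmv_mulVec, vmv_mulVec, hWuu, ← hα]; simp
  have hQu : Q *ᵥ u = 0 := by rw [hQ, sub_mulVec, one_mulVec, hPu, sub_self]
  have hQv : Q *ᵥ v = 0 := by rw [hQ, sub_mulVec, one_mulVec, hPv, sub_self]
  have hKu : K *ᵥ u = -(W *ᵥ v) - α • u := by
    rw [hK, ← Matrix.mulVec_mulVec, ← Matrix.mulVec_mulVec, hJu, Matrix.mulVec_neg,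
      Matrix.mulVec_neg, hQ, sub_mulVec, one_mulVec, hPq]
    module
  have hKv : K *ᵥ v = W *ᵥ u - α • v := by
    rw [hK, ← Matrix.mulVec_mulVec, ← Matrix.mulVec_mulVec, hJv, hQ, sub_mulVec,
      one_mulVec, hPp]
  have hKtu : Kᵀ *ᵥ u = 0 := by
    rw [hK, transpose_mul, transpose_mul, hQt, ← Matrix.mulVec_mulVec,
      ← Matrix.mulVec_mulVec, hQu, Matrix.mulVec_zero, Matrix.mulVec_zero]
  have hKtv : Kᵀ *ᵥ v = 0 := by
    rw [hK, transpose_mul, transpose_mul, hQt, ← Matrix.mulVec_mulVec,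
      ← Matrix.mulVec_mulVec, hQv, Matrix.mulVec_zero, Matrix.mulVec_zero]
  have hUu : U *ᵥ u = -(W *ᵥ v) := by
    rw [hU, add_mulVec, add_mulVec, Matrix.smul_mulVec, hPu, hKu, hKtu]
    module
  have hUv : U *ᵥ v = W *ᵥ u := by
    rw [hU, add_mulVec, add_mulVec, Matrix.smul_mulVec, hPv, hKv, hKtv]
    module
  have hUt : Uᵀ = U := by
    rw [hU, transpose_add, transpose_smul, hPt, transpose_add, transpose_transpose,
      add_comm Kᵀ K]
  -- value identity
  have hval : (A * U * (γ • J) * U).trace = (A * W * (γ • J) * Wᵀ).trace := by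
    have h1 : A * U * (γ • J) * U = A * U * (γ • J) * Uᵀ := by rw [hUt]
    rw [h1, hJ, val_eq, val_eq, hUu, hUv, Matrix.mulVec_neg, dotProduct_neg, neg_dotProduct]
    ring
  -- trace identities
  have htrK : K.trace = 0 := by
    rw [hK, trace_mul_comm, ← Matrix.mul_assoc, hJQ, Matrix.zero_mul, trace_zero]
  have hPK : P * K = 0 := by
    rw [hK]; simp only [← Matrix.mul_assoc]; rw [hPQ, Matrix.zero_mul, Matrix.zero_mul]
  have hKP : K * P = K := by rw [hK, Matrix.mul_assoc, hJP]
  have hKK : K * K = 0 := by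
    have e : K * K = (Q * W) * ((J * Q) * (W * J)) := by
      rw [hK]; simp only [Matrix.mul_assoc]
    rw [e, hJQ, Matrix.zero_mul, Matrix.mul_zero]
  have htrPKt : (P * Kᵀ).trace = 0 := by
    rw [← Matrix.trace_transpose, transpose_mul, transpose_transpose, hPt, hKP, htrK]
  have htrKtP : (Kᵀ * P).trace = 0 := by rw [trace_mul_comm]; exact htrPKt
  have htrKP : (K * P).trace = 0 := by rw [hKP]; exact htrK
  have htrPK : (P * K).trace = 0 := by rw [hPK, trace_zero]
  have htrKtKt : (Kᵀ * Kᵀ).trace = 0 := by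
    rw [← transpose_mul, Matrix.trace_transpose, hKK, trace_zero]
  have htrKKt : (K * Kᵀ).trace = (Kᵀ * K).trace := trace_mul_comm _ _
  have hUU : (U * U).trace = 2 * α ^ 2 + 2 * (Kᵀ * K).trace := by
    rw [hU]
    simp only [Matrix.add_mul, Matrix.mul_add, Matrix.smul_mul, Matrix.mul_smul,
      trace_add, trace_smul, smul_eq_mul, hPP, hKK]
    rw [htrP, htrPKt, htrKtP, htrKP, htrPK, htrKtKt, htrKKt, trace_zero]
    ring
  -- the W trace decomposition
  have hKtK : (Kᵀ * K).trace = (Wᵀ * (Q * (W * P))).trace := by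
    have e : Kᵀ * K = Jᵀ * (Wᵀ * ((Q * Q) * (W * J))) := by
      rw [hK]; simp only [transpose_mul, hQt, Matrix.mul_assoc]
    rw [e, hQQ, trace_mul_comm]
    have e2 : Wᵀ * (Q * (W * J)) * Jᵀ = Wᵀ * (Q * (W * (J * Jᵀ))) := by
      simp only [Matrix.mul_assoc]
    rw [e2, hJJt]
  have hPWP : P * W * P = (-α) • J := by
    have e1 : P * W * P = vecMulVec u (P *ᵥ (Wᵀ *ᵥ u)) + vecMulVec v (P *ᵥ (Wᵀ *ᵥ v)) := by
      rw [hP, Matrix.add_mul, Matrix.add_mul, vmv_mul, vmv_mul, vmv_mul, vmv_mul, hPt]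
    rw [e1, hW, Matrix.neg_mulVec, Matrix.neg_mulVec, Matrix.mulVec_neg, Matrix.mulVec_neg,
      hPp, hPq, hJ]
    ext i j
    simp [vecMulVec_apply]
    ring
  have hWsplit : W = P * W * P + (P * W * Q + (Q * W * P + Q * W * Q)) := by
    rw [hQ]; noncomm_ring
  have trd0 : ((P * W * P)ᵀ * (P * W * P)).trace = 2 * α ^ 2 := by
    rw [hPWP, transpose_smul, Matrix.smul_mul, Matrix.mul_smul, hJtJ, trace_smul,
      trace_smul, htrP, smul_eq_mul, smul_eq_mul]
    ring
  have trswap : (Wᵀ * (P * (W * Q))).trace = (Wᵀ * (Q * (W * P))).trace := by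
    have l : ∀ R S : Matrix (Fin n) (Fin n) ℝ,
        (Wᵀ * (R * (W * S))).trace = -((W * R) * (W * S)).trace := by
      intro R S
      rw [hW, Matrix.neg_mul, trace_neg]
      simp only [Matrix.mul_assoc]
    rw [l P Q, l Q P, trace_mul_comm]
  have trd1 : ((P * W * Q)ᵀ * (P * W * Q)).trace = (Kᵀ * K).trace := by
    have e : (P * W * Q)ᵀ * (P * W * Q) = Q * (Wᵀ * ((P * P) * (W * Q))) := by
      simp only [transpose_mul, hPt, hQt, Matrix.mul_assoc]
    rw [e, hPP, trace_mul_comm]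
    have e2 : Wᵀ * (P * (W * Q)) * Q = Wᵀ * (P * (W * (Q * Q))) := by
      simp only [Matrix.mul_assoc]
    rw [e2, hQQ, trswap, ← hKtK]
  have trd2 : ((Q * W * P)ᵀ * (Q * W * P)).trace = (Kᵀ * K).trace := by
    have e : (Q * W * P)ᵀ * (Q * W * P) = P * (Wᵀ * ((Q * Q) * (W * P))) := by
      simp only [transpose_mul, hPt, hQt, Matrix.mul_assoc]
    rw [e, hQQ, trace_mul_comm]
    have e2 : Wᵀ * (Q * (W * P)) * P = Wᵀ * (Q * (W * (P * P))) := by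
      simp only [Matrix.mul_assoc]
    rw [e2, hPP, ← hKtK]
  have hWW : (Wᵀ * W).trace
      = 2 * α ^ 2 + 2 * (Kᵀ * K).trace + ((Q * W * Q)ᵀ * (Q * W * Q)).trace := by
    conv_lhs => rw [hWsplit]
    simp only [transpose_add, Matrix.add_mul, Matrix.mul_add, trace_add]
    rw [cross0 W P P P Q hPt hPt (Or.inr hQP), cross0 W P P Q P hPt hPt (Or.inl hPQ),
        cross0 W P P Q Q hPt hPt (Or.inl hPQ), cross0 W P Q P P hPt hQt (Or.inr hPQ),
        cross0 W P Q Q P hPt hQt (Or.inl hPQ), cross0 W P Q Q Q hPt hQt (Or.inl hPQ),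
        cross0 W Q P P P hQt hPt (Or.inl hQP), cross0 W Q P P Q hQt hPt (Or.inl hQP),
        cross0 W Q P Q Q hQt hPt (Or.inr hQP), cross0 W Q Q P P hQt hQt (Or.inl hQP),
        cross0 W Q Q P Q hQt hQt (Or.inl hQP), cross0 W Q Q Q P hQt hQt (Or.inr hPQ),
        trd0, trd1, trd2]
    ring
  refine ⟨U, hUt, ?_, ?_⟩
  · have h0 : 0 ≤ ((Q * W * Q)ᵀ * (Q * W * Q)).trace := trace_conj_nonneg _
    calc (Uᵀ * U).trace = (U * U).trace := by rw [hUt]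
      _ = 2 * α ^ 2 + 2 * (Kᵀ * K).trace := hUU
      _ ≤ (Wᵀ * W).trace := by rw [hWW]; linarith
  · exact hval



lemma dot_self_nonneg (w : Fin n → ℝ) : 0 ≤ w ⬝ᵥ w :=
  Finset.sum_nonneg fun i _ => mul_self_nonneg _

lemma single_dot (i j : Fin n) :
    (Pi.single i 1 : Fin n → ℝ) ⬝ᵥ Pi.single j 1 = if i = j then 1 else 0 := by
  simp [dotProduct, Pi.single_apply, eq_comm]

lemma decomp (hn : 2 ≤ n) (B : Matrix (Fin n) (Fin n) ℝ) (hB : Bᵀ = -B) (hr : B.rank ≤ 2) :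
    ∃ u v : Fin n → ℝ, ∃ γ : ℝ, u ⬝ᵥ u = 1 ∧ v ⬝ᵥ v = 1 ∧ u ⬝ᵥ v = 0 ∧
      B = γ • (vecMulVec u v - vecMulVec v u) := by
  by_cases hB0 : B = 0
  · have h01 : (⟨0, by omega⟩ : Fin n) ≠ ⟨1, by omega⟩ := by
      intro h; simpa using congrArg Fin.val h
    refine ⟨Pi.single ⟨0, by omega⟩ 1, Pi.single ⟨1, by omega⟩ 1, 0, ?_, ?_, ?_, ?_⟩
    · rw [single_dot]; simp
    · rw [single_dot]; simp
    · rw [single_dot]; simp [h01]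
    · simp [hB0]
  · -- B ≠ 0 : find x with B *ᵥ x ≠ 0
    have hx : ∃ x, B *ᵥ x ≠ 0 := by
      by_contra h
      push_neg at h
      exact hB0 (mulVec_eq_iff B 0 (by simp [h]))
    obtain ⟨x, hx⟩ := hx
    set w : Fin n → ℝ := B *ᵥ x with hw
    have hww : 0 < w ⬝ᵥ w :=
      lt_of_le_of_ne (dot_self_nonneg w) (fun h => hx (dotProduct_self_eq_zero.mp h.symm))
    set c : ℝ := Real.sqrt (w ⬝ᵥ w) with hc
    have hc0 : 0 < c := Real.sqrt_pos.mpr hww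
    set v : Fin n → ℝ := c⁻¹ • w with hv
    have hvv : v ⬝ᵥ v = 1 := by
      rw [hv, dotProduct_smul, smul_dotProduct, smul_eq_mul, smul_eq_mul, ← mul_assoc,
        hc, ← Real.sqrt_inv, Real.mul_self_sqrt (by positivity), inv_mul_cancel₀ (ne_of_gt hww)]
    have hvmem : v = B *ᵥ (c⁻¹ • x) := by rw [mulVec_smul, hv, hw]
    have hBv : B *ᵥ v ≠ 0 := by
      intro h0
      have h1 := skew_dot hB v (c⁻¹ • x)
      rw [← hvmem, h0, dotProduct_zero, neg_zero, hvv] at h1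
      norm_num at h1
    set w2 : Fin n → ℝ := B *ᵥ v with hw2
    have hw2w2 : 0 < w2 ⬝ᵥ w2 :=
      lt_of_le_of_ne (dot_self_nonneg w2) (fun h => hBv (dotProduct_self_eq_zero.mp h.symm))
    set β : ℝ := Real.sqrt (w2 ⬝ᵥ w2) with hβ
    have hβ0 : 0 < β := Real.sqrt_pos.mpr hw2w2
    set u : Fin n → ℝ := -(β⁻¹ • w2) with hu
    have huu : u ⬝ᵥ u = 1 := by
      rw [hu, neg_dotProduct, dotProduct_neg, neg_neg, dotProduct_smul, smul_dotProduct,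
        smul_eq_mul, smul_eq_mul, ← mul_assoc, hβ, ← Real.sqrt_inv,
        Real.mul_self_sqrt (by positivity), inv_mul_cancel₀ (ne_of_gt hw2w2)]
    have huv : u ⬝ᵥ v = 0 := by
      rw [hu, neg_dotProduct, smul_dotProduct, dotProduct_comm, hw2, skew_dot_self hB v]
      simp
    have hBveq : B *ᵥ v = (-β) • u := by
      rw [hu, ← hw2, smul_neg, neg_smul, neg_neg, ← smul_assoc, smul_eq_mul,
        mul_inv_cancel₀ (ne_of_gt hβ0), one_smul]
    -- span = range
    have humem : u = B *ᵥ (-(β⁻¹ • v)) := by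
      rw [hu, hw2, ← mulVec_smul, ← Matrix.mulVec_neg]
    have hspan : Submodule.span ℝ ({u, v} : Set (Fin n → ℝ)) = LinearMap.range B.mulVecLin := by
      apply Submodule.eq_of_le_of_finrank_le
      · rw [Submodule.span_le]
        rintro z hz
        rcases hz with rfl | rfl
        · exact ⟨-(β⁻¹ • v), by rw [mulVecLin_apply, ← humem]⟩
        · exact ⟨c⁻¹ • x, by rw [mulVecLin_apply, ← hvmem]⟩
      · have hli : LinearIndependent ℝ ![u, v] := by
          rw [LinearIndependent.pair_iff]
          intro s t hst
          have h1 : u ⬝ᵥ (s • u + t • v) = s := by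
            rw [dotProduct_add, dotProduct_smul, dotProduct_smul, huu, huv]
            simp
          have h2 : v ⬝ᵥ (s • u + t • v) = t := by
            rw [dotProduct_add, dotProduct_smul, dotProduct_smul, hvv,
              dotProduct_comm v u, huv]
            simp
          rw [hst, dotProduct_zero] at h1 h2
          exact ⟨h1.symm, h2.symm⟩
        have hcard : Module.finrank ℝ (Submodule.span ℝ (Set.range ![u, v])) = 2 := by
          rw [finrank_span_eq_card hli]
          simp
        have hrange_eq : Set.range ![u, v] = ({u, v} : Set (Fin n → ℝ)) := by
          ext z
          simp [Fin.exists_fin_two]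
          tauto
        rw [← hrange_eq, hcard]
        exact hr
    have hmem : ∀ z, B *ᵥ z ∈ Submodule.span ℝ ({u, v} : Set (Fin n → ℝ)) := by
      intro z
      rw [hspan]
      exact ⟨z, rfl⟩
    have hvu : v ⬝ᵥ u = 0 := by rw [dotProduct_comm]; exact huv
    have coord : ∀ y ∈ Submodule.span ℝ ({u, v} : Set (Fin n → ℝ)),
        y = (u ⬝ᵥ y) • u + (v ⬝ᵥ y) • v := by
      intro y hy
      obtain ⟨a, b, hab⟩ := Submodule.mem_span_pair.mp hy
      rw [← hab]
      simp [dotProduct_add, dotProduct_smul, huu, huv, hvv, hvu]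
    have hBu : B *ᵥ u = β • v := by
      have h := coord _ (hmem u)
      have h2 : v ⬝ᵥ (B *ᵥ u) = β := by
        rw [skew_dot hB v u, hBveq, dotProduct_smul, huu]
        simp
      rw [skew_dot_self hB u, h2] at h
      simpa using h
    refine ⟨u, v, -β, huu, hvv, huv, ?_⟩
    apply mulVec_eq_iff
    intro z
    have hz := coord _ (hmem z)
    have e1 : u ⬝ᵥ (B *ᵥ z) = -(β * (v ⬝ᵥ z)) := by
      rw [skew_dot hB u z, hBu, dotProduct_smul, smul_eq_mul, dotProduct_comm z v]
    have e2 : v ⬝ᵥ (B *ᵥ z) = β * (u ⬝ᵥ z) := by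
      rw [skew_dot hB v z, hBveq, dotProduct_smul, smul_eq_mul, dotProduct_comm z u]
      ring
    rw [e1, e2] at hz
    rw [hz, Matrix.smul_mulVec, sub_mulVec, vmv_mulVec, vmv_mulVec]
    module



lemma frobNorm_eq_one_iff (M : Matrix (Fin n) (Fin n) ℝ) :
    frobNorm M = 1 ↔ (Mᵀ * M).trace = 1 := by
  unfold frobNorm
  exact Real.sqrt_eq_one

lemma conj_trace_zero (U : Matrix (Fin n) (Fin n) ℝ) (h : (Uᵀ * U).trace = 0) : U = 0 := by
  rw [trace_conj_eq_sum] at h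
  have h2 := (Finset.sum_eq_zero_iff_of_nonneg
    (fun j _ => Finset.sum_nonneg fun i _ => sq_nonneg (U i j))).mp h
  ext i j
  have h3 := (Finset.sum_eq_zero_iff_of_nonneg (fun i _ => sq_nonneg (U i j))).mp
    (h2 j (Finset.mem_univ j)) i (Finset.mem_univ i)
  simpa using pow_eq_zero_iff (n := 2) (by norm_num) |>.mp h3

lemma entry_abs_le (U : Matrix (Fin n) (Fin n) ℝ) (h : (Uᵀ * U).trace = 1) (i j : Fin n) :
    |U i j| ≤ 1 := by
  have hs := trace_conj_eq_sum U
  rw [h] at hs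
  have h1 : (U i j)^2 ≤ 1 := by
    rw [hs]
    calc (U i j)^2 ≤ ∑ i', (U i' j)^2 :=
          Finset.single_le_sum (f := fun i' => (U i' j)^2) (fun _ _ => sq_nonneg _)
            (Finset.mem_univ i)
      _ ≤ ∑ j', ∑ i', (U i' j')^2 :=
          Finset.single_le_sum (f := fun j' => ∑ i', (U i' j')^2)
            (fun _ _ => Finset.sum_nonneg fun _ _ => sq_nonneg _) (Finset.mem_univ j)
  exact abs_le.mpr ⟨by nlinarith, by nlinarith⟩

lemma Eset_bound (A B : Matrix (Fin n) (Fin n) ℝ) :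
    ∃ C : ℝ, ∀ t ∈ Eset A B, |t| ≤ C := by
  refine ⟨∑ i : Fin n, ∑ x : Fin n, ∑ y : Fin n, ∑ j : Fin n, |A i j| * |B y x|, ?_⟩
  rintro t ⟨U, hUt, hUn, rfl⟩
  have hU : ∀ i j, |U i j| ≤ 1 := entry_abs_le U ((frobNorm_eq_one_iff U).mp hUn)
  have habs : ∀ (f g : Fin n → ℝ), (∀ i, |f i| ≤ g i) → |∑ i, f i| ≤ ∑ i, g i := by
    intro f g h
    calc |∑ i, f i| ≤ ∑ i, |f i| := Finset.abs_sum_le_sum_abs _ _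
      _ ≤ ∑ i, g i := Finset.sum_le_sum fun i _ => h i
  have e : (A * U * B * U).trace
      = ∑ i, ∑ x, ∑ y, ∑ j, A i j * U j y * B y x * U x i := by
    simp only [trace, diag_apply, mul_apply, Finset.sum_mul]
  rw [e]
  apply habs; intro i
  apply habs; intro x
  apply habs; intro y
  apply habs; intro j
  rw [abs_mul, abs_mul, abs_mul]
  have h1 := hU j y
  have h2 := hU x i
  have a1 := abs_nonneg (A i j)
  have a2 := abs_nonneg (B y x)
  have a3 := abs_nonneg (U j y)
  have a4 := abs_nonneg (U x i)
  have hUU : |U j y| * |U x i| ≤ 1 := by nlinarith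
  calc |A i j| * |U j y| * |B y x| * |U x i|
      = (|A i j| * |B y x|) * (|U j y| * |U x i|) := by ring
    _ ≤ (|A i j| * |B y x|) * 1 := mul_le_mul_of_nonneg_left hUU (mul_nonneg a1 a2)
    _ = |A i j| * |B y x| := by ring

lemma zero_mem_Eset (hn : 1 ≤ n) (A B : Matrix (Fin n) (Fin n) ℝ) (hA : Aᵀ = -A) :
    (0 : ℝ) ∈ Eset A B := by
  set e0 : Fin n → ℝ := Pi.single ⟨0, by omega⟩ 1 with he0
  have he : e0 ⬝ᵥ e0 = 1 := by rw [he0, single_dot]; simp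
  refine ⟨vecMulVec e0 e0, transpose_vmv e0 e0, ?_, ?_⟩
  · rw [frobNorm_eq_one_iff, transpose_vmv, vmv_mul_vmv, he, one_smul, trace_vmv, he]
  · have hz : (A *ᵥ e0) ⬝ᵥ e0 = 0 := by
      rw [dotProduct_comm]; exact skew_dot_self hA e0
    rw [mul_vmv, trace_vmv, ← Matrix.mulVec_mulVec, ← Matrix.mulVec_mulVec, vmv_mulVec,
      mulVec_smul, smul_dotProduct, smul_eq_mul, hz, mul_zero]

lemma Oset_nonempty (hn : 2 ≤ n) (A B : Matrix (Fin n) (Fin n) ℝ) :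
    (Oset A B).Nonempty := by
  set e0 : Fin n → ℝ := Pi.single ⟨0, by omega⟩ 1 with he0
  set e1 : Fin n → ℝ := Pi.single ⟨1, by omega⟩ 1 with he1
  have h01 : (⟨0, by omega⟩ : Fin n) ≠ ⟨1, by omega⟩ := by
    intro h; simpa using congrArg Fin.val h
  have h00 : e0 ⬝ᵥ e0 = 1 := by rw [he0, single_dot]; simp
  have h11 : e1 ⬝ᵥ e1 = 1 := by rw [he1, single_dot]; simp
  have h01d : e0 ⬝ᵥ e1 = 0 := by rw [he0, he1, single_dot]; simp [h01]
  have h10d : e1 ⬝ᵥ e0 = 0 := by rw [dotProduct_comm]; exact h01d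
  set J0 : Matrix (Fin n) (Fin n) ℝ := vecMulVec e0 e1 - vecMulVec e1 e0 with hJ0
  set W : Matrix (Fin n) (Fin n) ℝ := (Real.sqrt 2)⁻¹ • J0 with hW
  have hJt : J0ᵀ = -J0 := by rw [hJ0, transpose_sub, transpose_vmv, transpose_vmv, neg_sub]
  refine ⟨_, W, ?_, ?_, rfl⟩
  · rw [hW, transpose_smul, hJt, smul_neg]
  · rw [frobNorm_eq_one_iff, hW, transpose_smul, Matrix.smul_mul, Matrix.mul_smul,
      trace_smul, trace_smul, hJt, Matrix.neg_mul, hJ0]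
    rw [Matrix.sub_mul, Matrix.mul_sub, Matrix.mul_sub, vmv_mul_vmv, vmv_mul_vmv,
      vmv_mul_vmv, vmv_mul_vmv, h00, h11, h01d, h10d]
    simp only [one_smul, zero_smul, trace_neg, trace_sub, trace_vmv, h00, h11, sub_zero,
      zero_sub, smul_eq_mul]
    have h2 : (Real.sqrt 2) * (Real.sqrt 2) = 2 := Real.mul_self_sqrt (by norm_num)
    have h3 : Real.sqrt 2 ≠ 0 := by positivity
    field_simp
    rw [Real.sq_sqrt (by norm_num)]; norm_num

lemma Eset_comm (A B : Matrix (Fin n) (Fin n) ℝ) : Eset A B = Eset B A := by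
  have e : ∀ (X Y U : Matrix (Fin n) (Fin n) ℝ), (X * U * Y * U).trace = (Y * U * X * U).trace := by
    intro X Y U
    rw [show X * U * Y * U = (X * U) * (Y * U) by rw [Matrix.mul_assoc], trace_mul_comm,
      ← Matrix.mul_assoc]
  ext t
  constructor <;> rintro ⟨U, h1, h2, h3⟩ <;> exact ⟨U, h1, h2, by rw [h3, e]⟩

lemma Oset_comm (A B : Matrix (Fin n) (Fin n) ℝ) : Oset A B = Oset B A := by
  have key : ∀ (X Y W : Matrix (Fin n) (Fin n) ℝ), Wᵀ = -W →
      (X * W * Y * Wᵀ).trace = (Y * Wᵀ * X * Wᵀᵀ).trace := by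
    intro X Y W hW
    rw [transpose_transpose, show X * W * Y * Wᵀ = (X * W) * (Y * Wᵀ) by rw [Matrix.mul_assoc],
      trace_mul_comm, ← Matrix.mul_assoc]
  have skewt : ∀ W : Matrix (Fin n) (Fin n) ℝ, Wᵀ = -W → (Wᵀ)ᵀ = -(Wᵀ) := by
    intro W hW
    rw [hW, transpose_neg, hW, neg_neg]
  have normt : ∀ W : Matrix (Fin n) (Fin n) ℝ, frobNorm Wᵀ = frobNorm W := by
    intro W
    unfold frobNorm
    rw [transpose_transpose, trace_mul_comm]
  ext t
  constructor <;> rintro ⟨W, h1, h2, h3⟩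
  · exact ⟨Wᵀ, skewt W h1, (normt W).trans h2, by rw [h3, key A B W h1]⟩
  · exact ⟨Wᵀ, skewt W h1, (normt W).trans h2, by rw [h3, key B A W h1]⟩

lemma scale_val (A B U : Matrix (Fin n) (Fin n) ℝ) (c : ℝ) :
    (A * (c • U) * B * (c • U)).trace = c^2 * (A * U * B * U).trace := by
  simp only [Matrix.mul_smul, Matrix.smul_mul, trace_smul, smul_eq_mul]
  ring

lemma key (A B : Matrix (Fin n) (Fin n) ℝ) (hn : 2 ≤ n) (hA : Aᵀ = -A) (hB : Bᵀ = -B)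
    (hrB : B.rank ≤ 2) (t : ℝ) (ht : t ∈ Oset A B) :
    t = 0 ∨ ∃ s t₁ : ℝ, 0 < s ∧ s ≤ 1 ∧ t = s * t₁ ∧ t₁ ∈ Eset A B := by
  obtain ⟨W, hWt, hWn, rfl⟩ := ht
  obtain ⟨u, v, γ, hu, hv, huv, hBeq⟩ := decomp hn B hB hrB
  obtain ⟨U, hUt, hUn, hUval⟩ := construction A W u v hu hv huv γ hA hWt
  rw [← hBeq] at hUval
  have hW1 : (Wᵀ * W).trace = 1 := (frobNorm_eq_one_iff W).mp hWn
  rw [hW1] at hUn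
  have hs0 : 0 ≤ (Uᵀ * U).trace := trace_conj_nonneg U
  rcases eq_or_lt_of_le hs0 with hz | hpos
  · left
    have hU0 : U = 0 := conj_trace_zero U hz.symm
    rw [← hUval, hU0]
    simp
  · right
    set s := (Uᵀ * U).trace with hsdef
    set c := Real.sqrt s with hcdef
    have hc0 : 0 < c := Real.sqrt_pos.mpr hpos
    have hc2 : c^2 = s := Real.sq_sqrt (le_of_lt hpos)
    have hinv : (c⁻¹)^2 = s⁻¹ := by rw [inv_pow, hc2]
    refine ⟨s, (c⁻¹)^2 * (A * U * B * U).trace, hpos, hUn, ?_, ?_⟩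
    · rw [← hUval, hinv, ← mul_assoc, mul_inv_cancel₀ (ne_of_gt hpos), one_mul]
    · refine ⟨c⁻¹ • U, by rw [transpose_smul, hUt], ?_, by rw [scale_val]⟩
      rw [frobNorm_eq_one_iff, transpose_smul, Matrix.smul_mul, Matrix.mul_smul,
        trace_smul, trace_smul, smul_eq_mul, smul_eq_mul, ← hsdef]
      rw [show c⁻¹ * (c⁻¹ * s) = (c⁻¹)^2 * s by ring, hinv,
        inv_mul_cancel₀ (ne_of_gt hpos)]

lemma half (hn : 2 ≤ n) (A B : Matrix (Fin n) (Fin n) ℝ) (hA : Aᵀ = -A) (hB : Bᵀ = -B)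
    (hrB : B.rank ≤ 2) :
    sInf (Eset A B) ≤ sInf (Oset A B) ∧ sSup (Oset A B) ≤ sSup (Eset A B) := by
  obtain ⟨C, hC⟩ := Eset_bound A B
  have hbddA : BddAbove (Eset A B) := ⟨C, fun t ht => le_trans (le_abs_self t) (hC t ht)⟩
  have hbddB : BddBelow (Eset A B) := ⟨-C, fun t ht => by
    have h2 := abs_le.mp (hC t ht); linarith [h2.1]⟩
  have h0E : (0:ℝ) ∈ Eset A B := zero_mem_Eset (by omega) A B hA
  have hInf0 : sInf (Eset A B) ≤ 0 := csInf_le hbddB h0E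
  have hSup0 : 0 ≤ sSup (Eset A B) := le_csSup hbddA h0E
  have hON : (Oset A B).Nonempty := Oset_nonempty hn A B
  constructor
  · apply le_csInf hON
    intro t ht
    rcases key A B hn hA hB hrB t ht with rfl | ⟨s, t₁, hs0, hs1, rfl, ht₁⟩
    · exact hInf0
    · have h1 : sInf (Eset A B) ≤ t₁ := csInf_le hbddB ht₁
      rcases le_or_gt 0 t₁ with h | h
      · nlinarith
      · nlinarith
  · apply csSup_le hON
    intro t ht
    rcases key A B hn hA hB hrB t ht with rfl | ⟨s, t₁, hs0, hs1, rfl, ht₁⟩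
    · exact hSup0
    · have h1 : t₁ ≤ sSup (Eset A B) := le_csSup hbddA ht₁
      rcases le_or_gt t₁ 0 with h | h
      · nlinarith
      · nlinarith

theorem stmt_6 (n : ℕ) (hn : 2 ≤ n) (A B : Matrix (Fin n) (Fin n) ℝ)
    (hA : Aᵀ = -A) (hB : Bᵀ = -B) (hrank : min A.rank B.rank ≤ 2) :
    sInf (Eset A B) ≤ sInf (Oset A B) ∧ sSup (Oset A B) ≤ sSup (Eset A B) := by
  rcases min_le_iff.mp hrank with hrA | hrB
  · rw [Eset_comm, Oset_comm]
    exact half hn B A hB hA hrA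
  · exact half hn A B hA hB hrB
end

section
/- Let n ≥ 2 and let Ā, B̄ be n×n real symmetric matrices such that inf O(Ā,B̄) < inf E(Ā,B̄) (so the weak interlacing property fails for (Ā,B̄)). Then for every n×n real symmetric matrix A there exists μ₀ > 0 such that for all μ ≥ μ₀ one has inf O(A + μ·Ā, B̄) < inf E(A + μ·Ā, B̄); i.e., the weak interlacing property fails for (A + μ·Ā, B̄). -/
open Matrix

lemma frob_eq {n : ℕ} (U : Matrix (Fin n) (Fin n) ℝ) :
    frobNorm U = Real.sqrt (∑ j, ∑ i, U i j ^ 2) := by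
  unfold frobNorm
  congr 1
  simp [Matrix.trace, Matrix.mul_apply, Matrix.diag, sq]

lemma entry_le {n : ℕ} {U : Matrix (Fin n) (Fin n) ℝ} (h : frobNorm U = 1) :
    ∀ p q, |U p q| ≤ 1 := by
  intro p q
  rw [frob_eq] at h
  have hS : (∑ j, ∑ i, U i j ^ 2) = 1 := Real.sqrt_eq_one.mp h
  have h1 : U p q ^ 2 ≤ ∑ j, ∑ i, U i j ^ 2 := by
    have h0 : U p q ^ 2 ≤ ∑ i, U i q ^ 2 :=
      Finset.single_le_sum (f := fun i => U i q ^ 2) (fun i _ => sq_nonneg _) (Finset.mem_univ p)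
    have h2 : (∑ i, U i q ^ 2) ≤ ∑ j, ∑ i, U i j ^ 2 :=
      Finset.single_le_sum (f := fun j => ∑ i, U i j ^ 2)
        (fun j _ => Finset.sum_nonneg fun i _ => sq_nonneg _) (Finset.mem_univ q)
    linarith
  rw [hS] at h1
  nlinarith [abs_nonneg (U p q), sq_abs (U p q)]

lemma trace_expand {n : ℕ} (A U B V : Matrix (Fin n) (Fin n) ℝ) :
    (A * U * B * V).trace = ∑ i, ∑ l, ∑ k, ∑ j, A i j * U j k * B k l * V l i := by
  simp only [Matrix.trace, Matrix.mul_apply, Matrix.diag, Finset.sum_mul]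

lemma trace_bound {n : ℕ} (A B U V : Matrix (Fin n) (Fin n) ℝ)
    (hU : ∀ p q, |U p q| ≤ 1) (hV : ∀ p q, |V p q| ≤ 1) :
    |(A * U * B * V).trace| ≤ (∑ i, ∑ j, |A i j|) * (∑ i, ∑ j, |B i j|) := by
  rw [trace_expand]
  have key : ∀ i j k l, |A i j * U j k * B k l * V l i| ≤ |A i j| * |B k l| := by
    intro i j k l
    rw [abs_mul, abs_mul, abs_mul]
    calc |A i j| * |U j k| * |B k l| * |V l i| ≤ |A i j| * 1 * |B k l| * 1 := by
          gcongr
          · exact hU j k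
          · exact hV l i
    _ = |A i j| * |B k l| := by ring
  calc |∑ i, ∑ l, ∑ k, ∑ j, A i j * U j k * B k l * V l i|
      ≤ ∑ i, ∑ l, ∑ k, ∑ j, |A i j * U j k * B k l * V l i| := by
        refine (Finset.abs_sum_le_sum_abs _ _).trans (Finset.sum_le_sum fun i _ => ?_)
        refine (Finset.abs_sum_le_sum_abs _ _).trans (Finset.sum_le_sum fun l _ => ?_)
        refine (Finset.abs_sum_le_sum_abs _ _).trans (Finset.sum_le_sum fun k _ => ?_)
        exact Finset.abs_sum_le_sum_abs _ _
    _ ≤ ∑ i, ∑ l, ∑ k, ∑ j, |A i j| * |B k l| := by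
        refine Finset.sum_le_sum fun i _ => Finset.sum_le_sum fun l _ =>
          Finset.sum_le_sum fun k _ => Finset.sum_le_sum fun j _ => key i j k l
    _ = (∑ i, ∑ j, |A i j|) * (∑ i, ∑ j, |B i j|) := by
        simp only [← Finset.sum_mul, ← Finset.mul_sum]
        rw [Finset.sum_comm]
        congr 1
        exact Finset.sum_comm ..


lemma exists_sym_unit {n : ℕ} (hn : 1 ≤ n) :
    ∃ U : Matrix (Fin n) (Fin n) ℝ, Uᵀ = U ∧ frobNorm U = 1 := by
  set i0 : Fin n := ⟨0, hn⟩
  refine ⟨Matrix.of fun p q => if p = i0 ∧ q = i0 then (1:ℝ) else 0, ?_, ?_⟩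
  · ext p q
    simp only [Matrix.transpose_apply, Matrix.of_apply]
    by_cases h1 : p = i0 <;> by_cases h2 : q = i0 <;> simp_all
  · rw [frob_eq]
    have : (∑ j, ∑ i, ((Matrix.of fun p q => if p = i0 ∧ q = i0 then (1:ℝ) else 0) i j) ^ 2) = 1 := by
      simp [ite_and, ite_pow, Finset.sum_ite_eq]
    rw [this, Real.sqrt_one]

lemma exists_skew_unit {n : ℕ} (hn : 2 ≤ n) :
    ∃ W : Matrix (Fin n) (Fin n) ℝ, Wᵀ = -W ∧ frobNorm W = 1 := by
  set i0 : Fin n := ⟨0, by omega⟩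
  set i1 : Fin n := ⟨1, by omega⟩
  have hne : i0 ≠ i1 := by simp [i0, i1, Fin.ext_iff]
  set c : ℝ := Real.sqrt (1/2) with hc
  have hc2 : c ^ 2 = 1/2 := Real.sq_sqrt (by norm_num)
  set W : Matrix (Fin n) (Fin n) ℝ :=
    Matrix.of fun p q => if p = i0 ∧ q = i1 then c else if p = i1 ∧ q = i0 then -c else 0 with hW
  refine ⟨W, ?_, ?_⟩
  · ext p q
    simp only [hW, Matrix.transpose_apply, Matrix.neg_apply, Matrix.of_apply]
    by_cases h1 : p = i0 <;> by_cases h2 : q = i1 <;> by_cases h3 : p = i1 <;>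
      by_cases h4 : q = i0 <;> simp_all
  · rw [frob_eq]
    have hsq : ∀ i j, (W i j) ^ 2 =
        (if i = i0 ∧ j = i1 then c ^ 2 else 0) + (if i = i1 ∧ j = i0 then c ^ 2 else 0) := by
      intro i j
      simp only [hW, Matrix.of_apply]
      by_cases h1 : i = i0 ∧ j = i1
      · have h2 : ¬(i = i1 ∧ j = i0) := fun h2 => hne (h1.1.symm.trans h2.1)
        simp [h1, h2]
        exact fun h _ => absurd h hne
      · by_cases h2 : i = i1 ∧ j = i0
        · obtain ⟨hi, hj⟩ := h2
          subst hi; subst hj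
          have hne' : ¬(i1 = i0 ∧ i0 = i1) := fun h => hne h.1.symm
          simp [hne']
        · simp [h1, h2]
    have : (∑ j, ∑ i, (W i j) ^ 2) = 1 := by
      simp only [hsq, Finset.sum_add_distrib]
      simp [ite_and, Finset.sum_ite_eq, hc2]
      norm_num
    rw [this, Real.sqrt_one]


lemma lin_split {n : ℕ} (A Ab B U V : Matrix (Fin n) (Fin n) ℝ) (μ : ℝ) :
    ((A + μ • Ab) * U * B * V).trace = (A * U * B * V).trace + μ * (Ab * U * B * V).trace := by
  simp [Matrix.add_mul, Matrix.smul_mul, Matrix.trace_add, Matrix.trace_smul, smul_eq_mul]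

theorem stmt_16 (n : ℕ) (hn : 2 ≤ n) (Abar Bbar : Matrix (Fin n) (Fin n) ℝ)
    (hAbar : Abarᵀ = Abar) (hBbar : Bbarᵀ = Bbar)
    (hfail : sInf (Oset Abar Bbar) < sInf (Eset Abar Bbar))
    (A : Matrix (Fin n) (Fin n) ℝ) (hA : Aᵀ = A) :
    ∃ μ₀ : ℝ, 0 < μ₀ ∧ ∀ μ : ℝ, μ₀ ≤ μ →
      sInf (Oset (A + μ • Abar) Bbar) < sInf (Eset (A + μ • Abar) Bbar) := by
  set CA : ℝ := (∑ i, ∑ j, |A i j|) * (∑ i, ∑ j, |Bbar i j|) with hCAdef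
  set CAb : ℝ := (∑ i, ∑ j, |Abar i j|) * (∑ i, ∑ j, |Bbar i j|) with hCAbdef
  have hCA0 : 0 ≤ CA := by positivity
  set a : ℝ := sInf (Eset Abar Bbar) with ha
  set b : ℝ := sInf (Oset Abar Bbar) with hb
  set δ : ℝ := a - b with hδdef
  have hδ : 0 < δ := by simp only [hδdef]; linarith
  -- bddBelow of base sets
  have hbddE : BddBelow (Eset Abar Bbar) := by
    refine ⟨-CAb, fun t ht => ?_⟩
    obtain ⟨U, hUs, hUn, rfl⟩ := ht
    have := trace_bound Abar Bbar U U (entry_le hUn) (entry_le hUn)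
    have := abs_le.mp this
    linarith [this.1]
  have hbddO : BddBelow (Oset Abar Bbar) := by
    refine ⟨-CAb, fun t ht => ?_⟩
    obtain ⟨W, hWs, hWn, rfl⟩ := ht
    have := trace_bound Abar Bbar W Wᵀ (entry_le hWn) (fun p q => entry_le hWn q p)
    have := abs_le.mp this
    linarith [this.1]
  -- nonempty Oset Abar Bbar
  obtain ⟨W₀, hW₀s, hW₀n⟩ := exists_skew_unit hn
  have hOne : (Oset Abar Bbar).Nonempty :=
    ⟨(Abar * W₀ * Bbar * W₀ᵀ).trace, W₀, hW₀s, hW₀n, rfl⟩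
  -- near minimizer of Oset Abar Bbar
  obtain ⟨t₁, ht₁mem, ht₁lt⟩ := Real.lt_sInf_add_pos hOne (half_pos hδ)
  obtain ⟨W, hWs, hWn, rfl⟩ := ht₁mem
  -- symmetric unit for nonemptiness of Eset
  obtain ⟨U₀, hU₀s, hU₀n⟩ := exists_sym_unit (by omega : 1 ≤ n)
  refine ⟨(4 * CA + 1) / δ, by positivity, fun μ hμ => ?_⟩
  have hμδ : 4 * CA + 1 ≤ μ * δ := by
    rw [div_le_iff₀ hδ] at hμ
    linarith
  have hμ0 : 0 ≤ μ := by nlinarith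
  -- upper bound on sInf Oset
  have hbddO' : BddBelow (Oset (A + μ • Abar) Bbar) := by
    refine ⟨-CA - μ * CAb, fun t ht => ?_⟩
    obtain ⟨V, hVs, hVn, rfl⟩ := ht
    rw [lin_split]
    have h1 := (abs_le.mp (trace_bound A Bbar V Vᵀ (entry_le hVn) (fun p q => entry_le hVn q p))).1
    have h2 := (abs_le.mp (trace_bound Abar Bbar V Vᵀ (entry_le hVn) (fun p q => entry_le hVn q p))).1
    nlinarith
  have hmemO : ((A + μ • Abar) * W * Bbar * Wᵀ).trace ∈ Oset (A + μ • Abar) Bbar :=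
    ⟨W, hWs, hWn, rfl⟩
  have hupper : sInf (Oset (A + μ • Abar) Bbar) ≤ CA + μ * (b + δ / 2) := by
    refine (csInf_le hbddO' hmemO).trans ?_
    rw [lin_split]
    have h1 := (abs_le.mp (trace_bound A Bbar W Wᵀ (entry_le hWn) (fun p q => entry_le hWn q p))).2
    have h2 : (Abar * W * Bbar * Wᵀ).trace ≤ b + δ / 2 := le_of_lt ht₁lt
    nlinarith
  -- lower bound on sInf Eset
  have hlower : -CA + μ * a ≤ sInf (Eset (A + μ • Abar) Bbar) := by
    refine le_csInf ⟨((A + μ • Abar) * U₀ * Bbar * U₀).trace, U₀, hU₀s, hU₀n, rfl⟩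
      fun t ht => ?_
    obtain ⟨U, hUs, hUn, rfl⟩ := ht
    rw [lin_split]
    have h1 := (abs_le.mp (trace_bound A Bbar U U (entry_le hUn) (entry_le hUn))).1
    have h2 : a ≤ (Abar * U * Bbar * U).trace := csInf_le hbddE ⟨U, hUs, hUn, rfl⟩
    nlinarith
  have : CA + μ * (b + δ / 2) < -CA + μ * a := by nlinarith
  linarith
end
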